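/- Let g₁, …, g_k : ℝ → ℝ be absolutely continuous integrable functions, each vanishing on (−∞, 0]. Then the k-fold convolution g₁ * g₂ * ⋯ * g_k is of class C^{k−1} on ℝ, its (k−1)-th derivative is absolutely continuous, and the convolution together with its derivatives of order ≤ k−1 all vanish at 0. -/

import Mathlib

open MeasureTheory

/-- Convolution of two real functions. -/
noncomputable def convFn (f g : ℝ → ℝ) : ℝ → ℝ := fun x => ∫ t, f t * g (x - t)

/-- Iterated convolution of a nonempty list of functions. -/
noncomputable def multiConv : List (ℝ → ℝ) → (ℝ → ℝ)
  | [] => fun _ => 0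
  | [f] => f
  | f :: rest => convFn f (multiConv rest)

/-- A function is absolutely continuous if it is an indefinite integral of a
locally integrable function. -/
def AbsCont (h : ℝ → ℝ) : Prop :=
  ∃ h' : ℝ → ℝ, LocallyIntegrable h' volume ∧
    ∀ a b : ℝ, h b - h a = ∫ t in a..b, h' t

namespace ConvAux


lemma locInt_intervalIntegrable {φ : ℝ → ℝ} (hφ : LocallyIntegrable φ volume) (a b : ℝ) :
    IntervalIntegrable φ volume a b :=
  (intervalIntegrable_iff' (h := enorm_ne_top)).mpr (hφ.integrableOn_isCompact isCompact_uIcc)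


lemma absCont_continuous {h : ℝ → ℝ} (hac : AbsCont h) : Continuous h := by
  obtain ⟨u, hu, hid⟩ := hac
  have hh : h = fun b => h 0 + ∫ t in (0:ℝ)..b, u t := funext fun b => by
    have := hid 0 b; linarith
  rw [hh]
  exact continuous_const.add
    (intervalIntegral.continuous_primitive (fun a b => locInt_intervalIntegrable hu a b) 0)

lemma upgrade {h : ℝ → ℝ} (h0 : ∀ x ≤ (0:ℝ), h x = 0) (hac : AbsCont h) :
    ∃ u : ℝ → ℝ, LocallyIntegrable u volume ∧ (∀ t ≤ (0:ℝ), u t = 0) ∧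
      ∀ a b : ℝ, h b - h a = ∫ t in a..b, u t := by
  obtain ⟨u, hu, hid⟩ := hac
  set u' : ℝ → ℝ := Set.indicator (Set.Ioi 0) u with hu'def
  have hu' : LocallyIntegrable u' volume := hu.indicator measurableSet_Ioi
  have hu'0 : ∀ t ≤ (0:ℝ), u' t = 0 := fun t ht =>
    Set.indicator_of_notMem (by simpa using ht) u
  refine ⟨u', hu', hu'0, fun a b => ?_⟩
  have hmax : ∀ c : ℝ, h (max c 0) = h c := by
    intro c
    rcases le_total c 0 with hc | hc
    · rw [max_eq_right hc, h0 c hc, h0 0 le_rfl]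
    · rw [max_eq_left hc]
  have step1 : h b - h a = ∫ t in (max a 0)..(max b 0), u t := by
    rw [← hmax a, ← hmax b]; exact hid _ _
  have step2 : (∫ t in (max a 0)..(max b 0), u t) = ∫ t in (max a 0)..(max b 0), u' t := by
    apply intervalIntegral.integral_congr_ae
    filter_upwards with t ht
    have h1 : 0 < t := by
      rcases Set.mem_uIoc.mp ht with h' | h'
      · exact lt_of_le_of_lt (le_max_right a 0) h'.1
      · exact lt_of_le_of_lt (le_max_right b 0) h'.1
    rw [hu'def, Set.indicator_of_mem (Set.mem_Ioi.mpr h1)]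
  have zIic : ∀ c d : ℝ, Set.uIcc c d ⊆ Set.Iic 0 → (∫ t in c..d, u' t) = 0 := by
    intro c d hsub
    rw [intervalIntegral.integral_congr (g := fun _ => (0:ℝ))
      (fun t ht => Set.indicator_of_notMem (by simpa using (hsub ht : t ≤ 0)) u)]
    simp
  have i1 : ∫ t in a..(max a 0), u' t = 0 := by
    rcases le_total a 0 with ha | ha
    · refine zIic _ _ ?_
      rw [max_eq_right ha, Set.uIcc_of_le ha]
      exact Set.Icc_subset_Iic_self
    · rw [max_eq_left ha, intervalIntegral.integral_same]
  have i2 : ∫ t in (max b 0)..b, u' t = 0 := by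
    rcases le_total b 0 with hb | hb
    · refine zIic _ _ ?_
      rw [max_eq_right hb, Set.uIcc_of_ge hb]
      exact Set.Icc_subset_Iic_self
    · rw [max_eq_left hb, intervalIntegral.integral_same]
  have add1 := intervalIntegral.integral_add_adjacent_intervals
    (locInt_intervalIntegrable hu' a (max a 0)) (locInt_intervalIntegrable hu' (max a 0) (max b 0))
  have add2 := intervalIntegral.integral_add_adjacent_intervals
    (locInt_intervalIntegrable hu' a (max b 0)) (locInt_intervalIntegrable hu' (max b 0) b)
  rw [step1, step2]
  linarith



lemma integrand_integrable {φ ψ : ℝ → ℝ} (hφ : LocallyIntegrable φ volume)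
    (hφ0 : ∀ t ≤ (0:ℝ), φ t = 0) (hψ : Continuous ψ) (hψ0 : ∀ x ≤ (0:ℝ), ψ x = 0)
    (x : ℝ) : Integrable (fun t => φ t * ψ (x - t)) volume := by
  set R := max x 0 with hR
  obtain ⟨M, hM⟩ := (isCompact_Icc (a := x - R) (b := x)).exists_bound_of_continuousOn
    hψ.continuousOn
  refine Integrable.mono' (g := Set.indicator (Set.Icc 0 R) fun t => M * ‖φ t‖)
    ((integrable_indicator_iff measurableSet_Icc).mpr
      ((hφ.integrableOn_isCompact isCompact_Icc).norm.const_mul M))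
    (hφ.aestronglyMeasurable.mul
      ((hψ.comp (continuous_const.sub continuous_id)).aestronglyMeasurable)) ?_
  filter_upwards with t
  by_cases ht : t ∈ Set.Icc (0:ℝ) R
  · rw [Set.indicator_of_mem ht]
    have hxt : x - t ∈ Set.Icc (x - R) x := ⟨by linarith [ht.2], by linarith [ht.1]⟩
    calc ‖φ t * ψ (x - t)‖ = ‖ψ (x - t)‖ * ‖φ t‖ := by rw [norm_mul, mul_comm]
    _ ≤ M * ‖φ t‖ := by
        have := hM _ hxt
        exact mul_le_mul_of_nonneg_right this (norm_nonneg _)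
  · rw [Set.indicator_of_notMem ht]
    have hz : φ t * ψ (x - t) = 0 := by
      rcases lt_or_ge t 0 with h | h
      · rw [hφ0 t h.le, zero_mul]
      · have hRt : R < t := by
          rcases lt_or_ge R t with h' | h'
          · exact h'
          · exact absurd ⟨h, h'⟩ ht
        have hxR : x ≤ R := le_max_left x 0
        rw [hψ0 (x - t) (by linarith), mul_zero]
    simp [hz]

lemma conv_zero {φ ψ : ℝ → ℝ} (hφ0 : ∀ t ≤ (0:ℝ), φ t = 0) (hψ0 : ∀ x ≤ (0:ℝ), ψ x = 0) :
    ∀ x ≤ (0:ℝ), convFn φ ψ x = 0 := by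
  intro x hx
  have h : (fun t => φ t * ψ (x - t)) = fun _ => (0:ℝ) := funext fun t => by
    rcases le_or_gt t 0 with h | h
    · rw [hφ0 t h, zero_mul]
    · rw [hψ0 (x - t) (by linarith), mul_zero]
  simp only [convFn, h, integral_zero]

lemma conv_comm (φ ψ : ℝ → ℝ) (x : ℝ) : convFn φ ψ x = convFn ψ φ x := by
  show (∫ t, φ t * ψ (x - t)) = ∫ t, ψ t * φ (x - t)
  rw [← integral_sub_left_eq_self (fun t => φ t * ψ (x - t)) volume x]
  simp [mul_comm]

lemma conv_continuous {φ ψ : ℝ → ℝ} (hφ : LocallyIntegrable φ volume)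
    (hφ0 : ∀ t ≤ (0:ℝ), φ t = 0) (hψ : Continuous ψ) (hψ0 : ∀ x ≤ (0:ℝ), ψ x = 0) :
    Continuous (convFn φ ψ) := by
  rw [continuous_iff_continuousAt]
  intro x₀
  set R := max (x₀ + 1) 0 with hR
  obtain ⟨M, hM⟩ := (isCompact_Icc (a := x₀ - 1 - R) (b := x₀ + 1)).exists_bound_of_continuousOn
    hψ.continuousOn
  apply continuousAt_of_dominated (bound := Set.indicator (Set.Icc 0 R) fun t => M * ‖φ t‖)
  · filter_upwards with x
    exact hφ.aestronglyMeasurable.mul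
      ((hψ.comp (continuous_const.sub continuous_id)).aestronglyMeasurable)
  · filter_upwards [Metric.ball_mem_nhds x₀ one_pos] with x hx
    have hx' : |x - x₀| < 1 := by simpa [Real.dist_eq] using hx
    have hx1 : x₀ - 1 ≤ x := by have := abs_lt.mp hx'; linarith [this.1]
    have hx2 : x ≤ x₀ + 1 := by have := abs_lt.mp hx'; linarith [this.2]
    filter_upwards with t
    by_cases ht : t ∈ Set.Icc (0:ℝ) R
    · rw [Set.indicator_of_mem ht]
      have hxt : x - t ∈ Set.Icc (x₀ - 1 - R) (x₀ + 1) :=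
        ⟨by linarith [ht.2], by linarith [ht.1]⟩
      calc ‖φ t * ψ (x - t)‖ = ‖ψ (x - t)‖ * ‖φ t‖ := by rw [norm_mul, mul_comm]
      _ ≤ M * ‖φ t‖ := mul_le_mul_of_nonneg_right (hM _ hxt) (norm_nonneg _)
    · rw [Set.indicator_of_notMem ht]
      have hz : φ t * ψ (x - t) = 0 := by
        rcases lt_or_ge t 0 with h | h
        · rw [hφ0 t h.le, zero_mul]
        · have hRt : R < t := by
            rcases lt_or_ge R t with h' | h'
            · exact h'
            · exact absurd ⟨h, h'⟩ ht
          have : x₀ + 1 ≤ R := le_max_left _ _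
          rw [hψ0 (x - t) (by linarith), mul_zero]
      simp [hz]
  · exact (integrable_indicator_iff measurableSet_Icc).mpr
      ((hφ.integrableOn_isCompact isCompact_Icc).norm.const_mul M)
  · filter_upwards with t
    exact (continuousAt_const.mul ((hψ.comp (continuous_id.sub continuous_const)).continuousAt))



lemma conv_prod_integrable {φ v : ℝ → ℝ} (hφ : LocallyIntegrable φ volume)
    (hφ0 : ∀ t ≤ (0:ℝ), φ t = 0) (hv : LocallyIntegrable v volume)
    (hv0 : ∀ x ≤ (0:ℝ), v x = 0) {a b : ℝ} (hab : a ≤ b) :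
    Integrable (fun p : ℝ × ℝ => φ p.2 * v (p.1 - p.2))
      ((volume.restrict (Set.Ioc a b)).prod volume) := by
  have hmeas0 : AEStronglyMeasurable (fun p : ℝ × ℝ => φ p.2 * v (p.1 - p.2))
      ((volume : Measure ℝ).prod volume) := by
    have := hφ.aestronglyMeasurable.convolution_integrand (ContinuousLinearMap.mul ℝ ℝ)
      hv.aestronglyMeasurable
    simpa using this
  have hmeas : AEStronglyMeasurable (fun p : ℝ × ℝ => φ p.2 * v (p.1 - p.2))
      ((volume.restrict (Set.Ioc a b)).prod volume) := by
    have h1 : (volume.restrict (Set.Ioc a b)).prod (volume : Measure ℝ)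
        = ((volume : Measure ℝ).prod volume).restrict (Set.Ioc a b ×ˢ Set.univ) := by
      rw [← Measure.prod_restrict, Measure.restrict_univ]
    rw [h1]
    exact hmeas0.restrict
  rw [integrable_prod_iff' hmeas]
  constructor
  · refine Filter.Eventually.of_forall fun t => ?_
    have h2 : IntervalIntegrable (fun x => v (x - t)) volume a b := by
      have := (locInt_intervalIntegrable hv (a - t) (b - t)).comp_sub_right t
      simpa using this
    have h3 : IntegrableOn (fun x => v (x - t)) (Set.Ioc a b) volume :=
      (intervalIntegrable_iff_integrableOn_Ioc_of_le hab).mp h2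
    exact h3.const_mul (φ t)
  · set R := max b 0 with hR
    set C := ∫ y in Set.Icc (a - R) b, ‖v y‖ with hC
    have hkey : ∀ t ∈ Set.Icc (0:ℝ) R, (∫ x in Set.Ioc a b, ‖v (x - t)‖) ≤ C := by
      intro t ht
      have e1 : (∫ x in Set.Ioc a b, ‖v (x - t)‖) = ∫ x in Set.Ioc (a - t) (b - t), ‖v x‖ := by
        rw [← intervalIntegral.integral_of_le hab, ← intervalIntegral.integral_of_le
          (by linarith : a - t ≤ b - t)]
        exact intervalIntegral.integral_comp_sub_right (fun x => ‖v x‖) t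
      rw [e1, hC]
      refine setIntegral_mono_set (hv.integrableOn_isCompact isCompact_Icc).norm
        (Filter.Eventually.of_forall fun y => norm_nonneg _)
        (HasSubset.Subset.eventuallyLE fun y hy => ?_)
      exact ⟨by linarith [hy.1, ht.2], by linarith [hy.2, ht.1]⟩
    refine Integrable.mono' (g := Set.indicator (Set.Icc (0:ℝ) R) fun t => ‖φ t‖ * C)
      ((integrable_indicator_iff (measurableSet_Icc (a := (0:ℝ)) (b := R))).mpr
        ((hφ.integrableOn_isCompact isCompact_Icc).norm.mul_const C))
      (hmeas.norm.prod_swap.integral_prod_right') ?_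
    filter_upwards with t
    by_cases ht : t ∈ Set.Icc (0:ℝ) R
    · rw [Set.indicator_of_mem ht]
      rw [Real.norm_of_nonneg (integral_nonneg fun x => norm_nonneg _)]
      have e2 : (fun x => ‖φ t * v (x - t)‖) = fun x => ‖φ t‖ * ‖v (x - t)‖ := by
        funext x; rw [norm_mul]
      rw [e2, integral_const_mul]
      exact mul_le_mul_of_nonneg_left (hkey t ht) (norm_nonneg _)
    · rw [Set.indicator_of_notMem ht]
      have hz : (∫ x in Set.Ioc a b, ‖φ t * v (x - t)‖) = 0 := by
        rcases lt_or_ge t 0 with h | h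
        · have : (fun x => ‖φ t * v (x - t)‖) = fun _ => (0:ℝ) := by
            funext x; rw [hφ0 t h.le, zero_mul, norm_zero]
          rw [this, integral_zero]
        · have hRt : R < t := by
            rcases lt_or_ge R t with h' | h'
            · exact h'
            · exact absurd ⟨h, h'⟩ ht
          refine setIntegral_eq_zero_of_forall_eq_zero fun x hx => ?_
          have : x - t ≤ 0 := by
            have : x ≤ b := hx.2
            have : b ≤ R := le_max_left _ _
            linarith [hx.2]
          rw [hv0 (x - t) this, mul_zero, norm_zero]
      rw [hz]
      simp

lemma conv_integrableOn {φ v : ℝ → ℝ} (hφ : LocallyIntegrable φ volume)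
    (hφ0 : ∀ t ≤ (0:ℝ), φ t = 0) (hv : LocallyIntegrable v volume)
    (hv0 : ∀ x ≤ (0:ℝ), v x = 0) {a b : ℝ} (hab : a ≤ b) :
    IntegrableOn (convFn φ v) (Set.Ioc a b) volume :=
  (conv_prod_integrable hφ hφ0 hv hv0 hab).integral_prod_left

lemma conv_locallyIntegrable {φ v : ℝ → ℝ} (hφ : LocallyIntegrable φ volume)
    (hφ0 : ∀ t ≤ (0:ℝ), φ t = 0) (hv : LocallyIntegrable v volume)
    (hv0 : ∀ x ≤ (0:ℝ), v x = 0) :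
    LocallyIntegrable (convFn φ v) volume := by
  rw [locallyIntegrable_iff]
  intro K hK
  obtain ⟨r, hr⟩ := hK.isBounded.subset_closedBall 0
  set R := max r 0 with hRdef
  have hsub : K ⊆ Set.Ioc (-R - 1) R := by
    intro y hy
    have := hr hy
    rw [Real.closedBall_eq_Icc] at this
    have h1 : -r ≤ y := by simpa using this.1
    have h2 : y ≤ r := by simpa using this.2
    constructor
    · have : -R ≤ -r := neg_le_neg (le_max_left _ _)
      linarith
    · exact h2.trans (le_max_left _ _)
  exact (conv_integrableOn hφ hφ0 hv hv0 (by have : (0:ℝ) ≤ R := le_max_right _ _; linarith)).mono_set hsub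





lemma ftc_conv {φ V v : ℝ → ℝ} (hφ : LocallyIntegrable φ volume)
    (hφ0 : ∀ t ≤ (0:ℝ), φ t = 0)
    (hV : Continuous V) (hV0 : ∀ x ≤ (0:ℝ), V x = 0)
    (hv : LocallyIntegrable v volume) (hv0 : ∀ x ≤ (0:ℝ), v x = 0)
    (hVv : ∀ a b : ℝ, V b - V a = ∫ x in a..b, v x) (a b : ℝ) :
    convFn φ V b - convFn φ V a = ∫ x in a..b, convFn φ v x := by
  suffices H : ∀ a b : ℝ, a ≤ b → convFn φ V b - convFn φ V a = ∫ x in a..b, convFn φ v x by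
    rcases le_total a b with h | h
    · exact H a b h
    · rw [intervalIntegral.integral_symm, ← H b a h]; ring
  clear a b; intro a b hab
  have key : ∀ t : ℝ, φ t * V (b - t) - φ t * V (a - t)
      = ∫ x in Set.Ioc a b, φ t * v (x - t) := by
    intro t
    rw [← mul_sub, hVv (a - t) (b - t),
      ← intervalIntegral.integral_comp_sub_right (fun x => v x) t,
      ← intervalIntegral.integral_const_mul, intervalIntegral.integral_of_le hab]
  have ia := integrand_integrable hφ hφ0 hV hV0 a
  have ib := integrand_integrable hφ hφ0 hV hV0 b
  have lhs : convFn φ V b - convFn φ V a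
      = ∫ t, (φ t * V (b - t) - φ t * V (a - t)) := (integral_sub ib ia).symm
  rw [lhs]
  calc (∫ t, (φ t * V (b - t) - φ t * V (a - t)))
      = ∫ t, ∫ x in Set.Ioc a b, φ t * v (x - t) := by simp_rw [key]
    _ = ∫ x in Set.Ioc a b, ∫ t, φ t * v (x - t) := by
        apply MeasureTheory.integral_integral_swap
        exact (conv_prod_integrable hφ hφ0 hv hv0 hab).swap
    _ = ∫ x in a..b, convFn φ v x := by rw [intervalIntegral.integral_of_le hab]; rfl

lemma hasDerivAt_of_ftc {F D : ℝ → ℝ} (hD : Continuous D)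
    (hFD : ∀ a b : ℝ, F b - F a = ∫ x in a..b, D x) (x : ℝ) : HasDerivAt F (D x) x := by
  have hF : F = fun y => F 0 + ∫ t in (0:ℝ)..y, D t := funext fun y => by
    have := hFD 0 y; linarith
  rw [hF]
  have := (hasDerivAt_const x (F 0)).add
    (intervalIntegral.integral_hasDerivAt_right (hD.intervalIntegrable 0 x)
      (hD.stronglyMeasurableAtFilter volume (nhds x)) hD.continuousAt)
  simp only [zero_add] at this; exact this

lemma chain : ∀ (m : ℕ) (E : ℕ → ℝ → ℝ),
    (∀ j < m, ∀ x : ℝ, HasDerivAt (E j) (E (j + 1) x) x) → Continuous (E m) →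
    ContDiff ℝ (m : ℕ) (E 0) ∧ ∀ j ≤ m, iteratedDeriv j (E 0) = E j := by
  intro m
  induction m with
  | zero =>
    intro E _ hc
    refine ⟨contDiff_zero.mpr hc, fun j hj => ?_⟩
    rw [Nat.le_zero.mp hj, iteratedDeriv_zero]
  | succ m ih =>
    intro E hd hc
    obtain ⟨h1, h2⟩ := ih (fun j => E (j + 1)) (fun j hj x => hd (j + 1) (by omega) x) hc
    have hder : deriv (E 0) = E 1 := funext fun x => (hd 0 (by omega) x).deriv
    have hdiff : Differentiable ℝ (E 0) := fun x => (hd 0 (by omega) x).differentiableAt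
    constructor
    · rw [show ((m + 1 : ℕ) : WithTop ℕ∞) = (m : ℕ) + 1 by push_cast; rfl,
        contDiff_succ_iff_deriv]
      refine ⟨hdiff, ?_, hder ▸ h1⟩
      intro h
      simp at h
    · intro j hj
      cases j with
      | zero => rw [iteratedDeriv_zero]
      | succ j =>
        rw [iteratedDeriv_succ', hder]
        exact h2 j (by omega)

lemma conv_integrable {f g : ℝ → ℝ} (hf : Integrable f volume) (hg : Integrable g volume) :
    Integrable (convFn f g) volume := by
  have := hf.integrable_convolution (ContinuousLinearMap.mul ℝ ℝ) hg
  have e : convFn f g = convolution f g (ContinuousLinearMap.mul ℝ ℝ) volume := by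
    funext x; simp [convolution_def, ContinuousLinearMap.mul_apply', convFn]
  rw [e]; exact this













structure Good (n : ℕ) (F : ℝ → ℝ) : Prop where
  integrable : Integrable F volume
  contDiff : ContDiff ℝ (n : ℕ) F
  zero : ∀ j ≤ n, ∀ x ≤ (0:ℝ), iteratedDeriv j F x = 0
  ac : AbsCont (iteratedDeriv n F)

lemma good_step {f G : ℝ → ℝ} {n : ℕ} (hfi : Integrable f volume) (hfac : AbsCont f)
    (hf0 : ∀ x ≤ (0:ℝ), f x = 0) (hG : Good n G) : Good (n + 1) (convFn f G) := by
  obtain ⟨f', hf'li, hf'0, hf'id⟩ := upgrade hf0 hfac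
  have hfc : Continuous f := absCont_continuous hfac
  have hfli : LocallyIntegrable f volume := hfi.locallyIntegrable
  have hGli : LocallyIntegrable G volume := hG.integrable.locallyIntegrable
  have hGc : Continuous G := hG.contDiff.continuous
  have hG0 : ∀ x ≤ (0:ℝ), G x = 0 := fun x hx => by
    have := hG.zero 0 (Nat.zero_le n) x hx
    rwa [iteratedDeriv_zero] at this
  have hGjc : ∀ j ≤ n, Continuous (iteratedDeriv j G) := fun j hj =>
    hG.contDiff.continuous_iteratedDeriv j (by exact_mod_cast Nat.cast_le.mpr hj)
  have hGj0 : ∀ j ≤ n, ∀ x ≤ (0:ℝ), iteratedDeriv j G x = 0 := hG.zero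
  -- FTC identities for derivatives of G (for j < n)
  have hGftc : ∀ j < n, ∀ a b : ℝ,
      iteratedDeriv j G b - iteratedDeriv j G a = ∫ x in a..b, iteratedDeriv (j + 1) G x := by
    intro j hj a b
    have hder : ∀ x : ℝ, HasDerivAt (iteratedDeriv j G) (iteratedDeriv (j + 1) G x) x := by
      intro x
      rw [iteratedDeriv_succ]
      exact ((hG.contDiff.differentiable_iteratedDeriv j
        (by exact_mod_cast Nat.cast_lt.mpr hj)) x).hasDerivAt
    rw [intervalIntegral.integral_eq_sub_of_hasDerivAt (fun x _ => hder x)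
      (((hGjc (j + 1) hj).intervalIntegrable a b))]
  -- the chain of functions
  set E : ℕ → ℝ → ℝ := fun j => match j with
    | 0 => convFn f G
    | (j + 1) => convFn f' (iteratedDeriv j G) with hE
  have hEcont : ∀ j ≤ n + 1, Continuous (E j) := by
    intro j hj
    match j with
    | 0 => exact conv_continuous hfli hf0 hGc hG0
    | (j + 1) => exact conv_continuous hf'li hf'0 (hGjc j (by omega)) (hGj0 j (by omega))
  have hEzero : ∀ j ≤ n + 1, ∀ x ≤ (0:ℝ), E j x = 0 := by
    intro j hj x hx
    match j with
    | 0 => exact conv_zero hf0 hG0 x hx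
    | (j + 1) => exact conv_zero hf'0 (hGj0 j (by omega)) x hx
  have hEderiv : ∀ j < n + 1, ∀ x : ℝ, HasDerivAt (E j) (E (j + 1) x) x := by
    intro j hj
    match j with
    | 0 =>
      have hcomm : convFn f G = convFn G f := funext fun x => conv_comm f G x
      have hftc : ∀ a b : ℝ, E 0 b - E 0 a = ∫ x in a..b, E 1 x := by
        intro a b
        have h1 := ftc_conv hGli hG0 hfc hf0 hf'li hf'0 hf'id a b
        have h2 : ∀ x : ℝ, convFn G f' x = convFn f' G x := fun x => conv_comm G f' x
        show convFn f G b - convFn f G a = ∫ x in a..b, convFn f' (iteratedDeriv 0 G) x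
        rw [hcomm, h1]
        apply intervalIntegral.integral_congr
        intro x _
        rw [h2 x, iteratedDeriv_zero]
      exact hasDerivAt_of_ftc (hEcont 1 (by omega)) hftc
    | (j + 1) =>
      have hftc : ∀ a b : ℝ, E (j + 1) b - E (j + 1) a = ∫ x in a..b, E (j + 2) x := by
        intro a b
        show convFn f' (iteratedDeriv j G) b - convFn f' (iteratedDeriv j G) a
          = ∫ x in a..b, convFn f' (iteratedDeriv (j + 1) G) x
        exact ftc_conv hf'li hf'0 (hGjc j (by omega)) (hGj0 j (by omega))
          ((hGjc (j + 1) (by omega)).locallyIntegrable) (hGj0 (j + 1) (by omega))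
          (fun a b => hGftc j (by omega) a b) a b
      exact hasDerivAt_of_ftc (hEcont (j + 2) (by omega)) hftc
  obtain ⟨hcd, hit⟩ := chain (n + 1) E hEderiv (hEcont (n + 1) le_rfl)
  have hE0 : E 0 = convFn f G := rfl
  refine ⟨conv_integrable hfi hG.integrable, by rwa [hE0] at hcd, ?_, ?_⟩
  · intro j hj x hx
    have := hit j hj
    rw [hE0] at this
    rw [this]
    exact hEzero j hj x hx
  · have htop := hit (n + 1) le_rfl
    rw [hE0] at htop
    rw [htop]
    obtain ⟨H, hHli, hH0, hHid⟩ := upgrade (hGj0 n le_rfl) hG.ac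
    exact ⟨convFn f' H, conv_locallyIntegrable hf'li hf'0 hHli hH0,
      fun a b => ftc_conv hf'li hf'0 (hGjc n le_rfl) (hGj0 n le_rfl) hHli hH0 hHid a b⟩

lemma good_multiConv : ∀ (l : List (ℝ → ℝ)), l ≠ [] →
    (∀ f ∈ l, Integrable f volume ∧ AbsCont f ∧ ∀ x ≤ (0:ℝ), f x = 0) →
    Good (l.length - 1) (multiConv l)
  | [], h, _ => absurd rfl h
  | [f], _, hl => by
    obtain ⟨h1, h2, h3⟩ := hl f (by simp)
    have hm : multiConv [f] = f := rfl
    refine ⟨by rwa [hm], ?_, ?_, ?_⟩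
    · rw [hm, show ([f].length - 1 : ℕ) = 0 from rfl, Nat.cast_zero]
      exact contDiff_zero.mpr (absCont_continuous h2)
    · intro j hj x hx
      simp only [List.length_singleton] at hj ⊢
      rw [Nat.le_zero.mp hj, iteratedDeriv_zero, hm]
      exact h3 x hx
    · simp only [List.length_singleton]
      rw [show (1 - 1 : ℕ) = 0 from rfl, iteratedDeriv_zero, hm]
      exact h2
  | f :: g :: rest, _, hl => by
    have ih := good_multiConv (g :: rest) (by simp)
      (fun u hu => hl u (List.mem_cons_of_mem f hu))
    obtain ⟨h1, h2, h3⟩ := hl f (by simp)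
    have step := good_step h1 h2 h3 ih
    have hm : multiConv (f :: g :: rest) = convFn f (multiConv (g :: rest)) := rfl
    have hlen : (f :: g :: rest).length - 1 = (g :: rest).length - 1 + 1 := by
      simp
    rw [hlen, hm]
    exact step


end ConvAux

theorem stmt10 (k : ℕ) (hk : 1 ≤ k) (g : Fin k → ℝ → ℝ)
    (hint : ∀ i, Integrable (g i) volume)
    (hAC : ∀ i, AbsCont (g i))
    (hz : ∀ i, ∀ x ≤ (0:ℝ), g i x = 0) :
    ContDiff ℝ (k - 1 : ℕ) (multiConv (List.ofFn g)) ∧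
      AbsCont (iteratedDeriv (k - 1) (multiConv (List.ofFn g))) ∧
      ∀ j ≤ k - 1, iteratedDeriv j (multiConv (List.ofFn g)) 0 = 0 := by
  have hne : List.ofFn g ≠ [] := by
    apply List.ne_nil_of_length_pos
    rw [List.length_ofFn]; omega
  have hgood := ConvAux.good_multiConv (List.ofFn g) hne (fun f hf => by
    obtain ⟨i, rfl⟩ := List.mem_ofFn.mp hf
    exact ⟨hint i, hAC i, hz i⟩)
  rw [List.length_ofFn] at hgood
  exact ⟨hgood.contDiff, hgood.ac, fun j hj => hgood.zero j hj 0 le_rfl⟩
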